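/- In a target-weighted arena, for every state (s,b) of the graph of best alternatives G' and every finite path π in G' from the initial state (s0, +∞) to (s,b), the best alternative of π equals b. -/

import Mathlib

open scoped ENat

/-- A strategy maps a finite play (history, current position last) to the chosen
next position. -/
abbrev Strat (S : Type) := List S → S

/-- A two-player turn-based game arena: an ownership function (`true` = Player 1,
`false` = Player 2), an initial position and a transition relation. -/
structure Arena (S : Type) where
  owner : S → Bool
  init : S
  edge : S → S → Prop

namespace Arena

variable {S : Type}

/-- A strategy is valid if it always follows edges of the arena. -/
def Valid (A : Arena S) (σ : Strat S) : Prop :=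
  ∀ l : List S, A.edge (l.getLastD A.init) (σ l)

/-- Combine the strategy `σi` of player `i` with the strategy `σo` of her
opponent into a strategy profile. -/
def pairFor (i : Bool) (σi σo : Strat S) : Bool → Strat S :=
  fun b => if b = i then σi else σo

/-- The prefix of length `n` of the outcome of a strategy profile. -/
def outList (A : Arena S) (σ : Bool → Strat S) : ℕ → List S
  | 0 => [A.init]
  | n + 1 =>
      let l := outList A σ n
      l ++ [σ (A.owner (l.getLastD A.init)) l]

/-- The position reached after `n` rounds. -/
def cur (A : Arena S) (σ : Bool → Strat S) (n : ℕ) : S :=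
  (A.outList σ n).getLastD A.init

/-- The total weight of a finite play. -/
def pathWeight (w : S → S → ℕ) (l : List S) : ℕ :=
  ((l.zip l.tail).map fun p => w p.1 p.2).sum

/-- `n` is the round of the first visit of the outcome to the target set `C`. -/
def firstVisit (A : Arena S) (C : Set S) (σ : Bool → Strat S) (n : ℕ) : Prop :=
  A.cur σ n ∈ C ∧ ∀ m < n, A.cur σ m ∉ C

/-- The utility of a strategy profile w.r.t. edge weights `w` and target set `C`:
the sum of the weights up to the first visit to `C`, and `⊤` if `C` is never
visited. -/
noncomputable def util (A : Arena S) (w : S → S → ℕ) (C : Set S)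
    (σ : Bool → Strat S) : ℕ∞ :=
  ⨅ (n : ℕ) (_ : A.firstVisit C σ n), (pathWeight w (A.outList σ n) : ℕ∞)

/-- A strategy of player `i` is winning if all its outcomes against valid
opposing strategies visit the target set `C`. -/
def Winning (A : Arena S) (C : Set S) (i : Bool) (σi : Strat S) : Prop :=
  ∀ σo : Strat S, A.Valid σo → ∃ n, A.cur (pairFor i σi σo) n ∈ C

/-- Best response value of player `i` against opposing strategy `σo`. -/
noncomputable def br (A : Arena S) (w : S → S → ℕ) (C : Set S)
    (i : Bool) (σo : Strat S) : ℕ∞ :=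
  ⨅ (σi : Strat S) (_ : A.Valid σi), A.util w C (pairFor i σi σo)

end Arena

/-- Regret of utility `u` w.r.t. best-response value `b`, with the convention
`⊤ - ⊤ = ⊤`. -/
noncomputable def regPairVal (u b : ℕ∞) : ℕ∞ := if u = ⊤ then ⊤ else u - b

namespace Arena

variable {S : Type}

/-- The regret of strategy `σi` of player `i`. -/
noncomputable def regOf (A : Arena S) (w : S → S → ℕ) (C : Set S)
    (i : Bool) (σi : Strat S) : ℕ∞ :=
  ⨆ (σo : Strat S) (_ : A.Valid σo),
    regPairVal (A.util w C (pairFor i σi σo)) (A.br w C i σo)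

/-- The minimal regret of player `i`. -/
noncomputable def regMin (A : Arena S) (w : S → S → ℕ) (C : Set S) (i : Bool) : ℕ∞ :=
  ⨅ (σi : Strat S) (_ : A.Valid σi), A.regOf w C i σi

end Arena

namespace Arena

variable {S : Type}

/-- Best value achievable from `s` when both players cooperate, in a
target-weighted arena with target set `C` and target weights `μ`. -/
noncomputable def best (A : Arena S) (μ : S → ℕ) (C : Set S) (s : S) : ℕ∞ :=
  ⨅ (t : S) (_ : t ∈ C ∧ Relation.ReflTransGen A.edge s t), (μ t : ℕ∞)

/-- Best alternative for Player 1 of moving from `s` to `s'`. -/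
noncomputable def ba (A : Arena S) (μ : S → ℕ) (C : Set S) (s s' : S) : ℕ∞ :=
  if A.owner s = true then
    ⨅ (s'' : S) (_ : A.edge s s'' ∧ s'' ≠ s'), A.best μ C s''
  else ⊤

/-- Best alternative along a finite path (minimum of the best alternatives of
its edges, `⊤` for paths without edges). -/
noncomputable def baPath (A : Arena S) (μ : S → ℕ) (C : Set S) (l : List S) : ℕ∞ :=
  ((l.zip l.tail).map fun p => A.ba μ C p.1 p.2).foldr min ⊤

/-- The graph of best alternatives `G'` of a target-weighted arena. -/
noncomputable def baArena (A : Arena S) (μ : S → ℕ) (C : Set S) : Arena (S × ℕ∞) where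
  owner := fun p => A.owner p.1
  init := (A.init, ⊤)
  edge := fun p q =>
    A.edge p.1 q.1 ∧
      q.2 = if A.owner p.1 = true then min p.2 (A.ba μ C p.1 q.1) else p.2

/-- Utility in a target-weighted arena: the weight of the first target visited,
`⊤` if no target is visited. -/
noncomputable def utilT (A : Arena S) (μ : S → ℕ∞) (C : Set S)
    (σ : Bool → Strat S) : ℕ∞ :=
  ⨅ (n : ℕ) (_ : A.firstVisit C σ n), μ (A.cur σ n)

/-- Best response value of player `i` in a target-weighted arena. -/
noncomputable def brT (A : Arena S) (μ : S → ℕ∞) (C : Set S)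
    (i : Bool) (σo : Strat S) : ℕ∞ :=
  ⨅ (σi : Strat S) (_ : A.Valid σi), A.utilT μ C (pairFor i σi σo)

/-- Regret of a strategy in a target-weighted arena. -/
noncomputable def regOfT (A : Arena S) (μ : S → ℕ∞) (C : Set S)
    (i : Bool) (σi : Strat S) : ℕ∞ :=
  ⨆ (σo : Strat S) (_ : A.Valid σo),
    regPairVal (A.utilT μ C (pairFor i σi σo)) (A.brT μ C i σo)

/-- Minimal regret of player `i` in a target-weighted arena. -/
noncomputable def regMinT (A : Arena S) (μ : S → ℕ∞) (C : Set S) (i : Bool) : ℕ∞ :=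
  ⨅ (σi : Strat S) (_ : A.Valid σi), A.regOfT μ C i σi

/-- The min-max value of player `i` in a target-weighted arena. -/
noncomputable def minmaxT (A : Arena S) (μ : S → ℕ∞) (C : Set S) (i : Bool) : ℕ∞ :=
  ⨅ (σi : Strat S) (_ : A.Valid σi), ⨆ (σo : Strat S) (_ : A.Valid σo),
    A.utilT μ C (pairFor i σi σo)

/-- The strategy mapping `Φ₁` from strategies of `G` to strategies of the graph
of best alternatives `G'`: it simulates the given strategy on first projections
while tracking the minimal best alternative seen so far. -/
noncomputable def Phi1 (A : Arena S) (μ : S → ℕ) (C : Set S) (σ : Strat S) :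
    Strat (S × ℕ∞) :=
  fun l =>
    let h := l.map Prod.fst
    let s := σ h
    (s, A.baPath μ C (h ++ [s]))

end Arena

theorem test2 : True := trivial

/-- In the graph of best alternatives, every finite path from
the initial state `(s0, ⊤)` to a state `(s, b)` has best alternative exactly
`b`. -/
private lemma baPath_cons_cons {S : Type} (A : Arena S) (μ : S → ℕ) (C : Set S)
    (x y : S) (t : List S) :
    A.baPath μ C (x :: y :: t) = min (A.ba μ C x y) (A.baPath μ C (y :: t)) := by
  simp [Arena.baPath]

private lemma baPath_aux {S : Type} (A : Arena S) (μ : S → ℕ) (C : Set S) :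
    ∀ (l : List (S × ℕ∞)) (p : S × ℕ∞),
      (p :: l).Chain' (A.baArena μ C).edge →
      ∀ s b, (p :: l).getLast? = some (s, b) →
      b = min p.2 (A.baPath μ C ((p :: l).map Prod.fst)) := by
  intro l
  induction l with
  | nil =>
      intro p _ s b hlast
      simp at hlast
      rw [hlast]
      simp [Arena.baPath]
  | cons q t ih =>
      intro p hchain s b hlast
      rw [List.Chain', List.isChain_cons_cons] at hchain
      obtain ⟨hedge, hchain'⟩ := hchain
      have hlast' : (q :: t).getLast? = some (s, b) := by
        rwa [List.getLast?_cons_cons] at hlast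
      have hb := ih q hchain' s b hlast'
      have hq2 : q.2 = min p.2 (A.ba μ C p.1 q.1) := by
        obtain ⟨_, h2⟩ := hedge
        by_cases how : A.owner p.1 = true
        · simpa [how] using h2
        · have : A.ba μ C p.1 q.1 = ⊤ := by simp [Arena.ba, how]
          simp [how, this] at h2 ⊢
          exact h2
      have hmap : (p :: q :: t).map Prod.fst = p.1 :: q.1 :: t.map Prod.fst := by
        simp
      rw [hmap, baPath_cons_cons]
      have : ((q :: t).map Prod.fst) = q.1 :: t.map Prod.fst := by simp
      rw [this] at hb
      rw [hb, hq2]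
      rw [min_assoc, min_left_comm]

theorem baPath_eq_snd {S : Type} (A : Arena S) (μ : S → ℕ) (C : Set S)
    (l : List (S × ℕ∞)) (hne : l ≠ [])
    (hchain : l.Chain' (A.baArena μ C).edge)
    (hhead : l.head? = some (A.init, (⊤ : ℕ∞)))
    (s : S) (b : ℕ∞) (hlast : l.getLast? = some (s, b)) :
    A.baPath μ C (l.map Prod.fst) = b := by
  obtain ⟨p, l', rfl⟩ : ∃ p l', l = p :: l' := by
    cases l with
    | nil => exact absurd rfl hne
    | cons p l' => exact ⟨p, l', rfl⟩
  have hp : p = (A.init, (⊤ : ℕ∞)) := by simpa using hhead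
  have := baPath_aux A μ C l' p hchain s b hlast
  subst hp
  simp at this
  simpa using this.symm
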